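/- With the notation of the Gaudin model, the Gaudin Hamiltonians commute pairwise: [Ξ_i, Ξ_j] = 0 for all i, j = 1,...,N. -/

import Mathlib

open scoped TensorProduct

noncomputable section

/-- `A^{(i)}`: the element of `U(g)^{⊗N}` with `x` in the `i`-th slot and `1` elsewhere. -/
def slot {L : Type*} [LieRing L] [LieAlgebra ℂ L] (N : ℕ) (i : Fin N)
    (x : UniversalEnvelopingAlgebra ℂ L) :
    ⨂[ℂ] _ : Fin N, UniversalEnvelopingAlgebra ℂ L :=
  PiTensorProduct.tprod ℂ
    (Function.update (fun _ => (1 : UniversalEnvelopingAlgebra ℂ L)) i x)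

/-- The image `A^{(i)}` of `A ∈ g` in the `i`-th slot of `U(g)^{⊗N}`. -/
def slotL {L : Type*} [LieRing L] [LieAlgebra ℂ L] (N : ℕ) (i : Fin N) (A : L) :
    ⨂[ℂ] _ : Fin N, UniversalEnvelopingAlgebra ℂ L :=
  slot N i (UniversalEnvelopingAlgebra.ι ℂ A)

/-- The Gaudin Hamiltonian `Ξ_i = Σ_{j≠i} Σ_a J_a^{(i)} J^{a(j)} / (z_i - z_j)`. -/
def gaudin {L : Type*} [LieRing L] [LieAlgebra ℂ L] (N d : ℕ) (z : Fin N → ℂ)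
    (J J' : Fin d → L) (i : Fin N) :
    ⨂[ℂ] _ : Fin N, UniversalEnvelopingAlgebra ℂ L :=
  ∑ j ∈ Finset.univ.erase i, ∑ a : Fin d,
    (z i - z j)⁻¹ • (slotL N i (J a) * slotL N j (J' a))

/-! ### Auxiliary ring lemmas -/

section ring
variable {A : Type*} [Ring A]

lemma mid_comm {a b : A} (c : A) (h : a * b = b * a) : a * (b * c) = b * (a * c) := by
  rw [← mul_assoc, h, mul_assoc]

lemma lie4A (P Q R S : A) (hPR : P * R = R * P) (hPS : P * S = S * P)
    (hQS : Q * S = S * Q) :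
    P * Q * (R * S) - R * S * (P * Q) = P * (Q * R - R * Q) * S := by
  simp only [mul_sub, sub_mul, mul_assoc]
  rw [mid_comm _ hPS.symm, mid_comm _ hPR.symm, ← hQS]

lemma lie4B (P Q R S : A) (hQR : Q * R = R * Q) (hQS : Q * S = S * Q)
    (hPR : P * R = R * P) :
    P * Q * (R * S) - R * S * (P * Q) = R * (P * S - S * P) * Q := by
  simp only [mul_sub, sub_mul, mul_assoc]
  rw [mid_comm _ hQR, mid_comm _ hPR, hQS]

lemma lie4C (P Q R S : A) (hQR : Q * R = R * Q) (hPR : P * R = R * P)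
    (hPS : P * S = S * P) :
    P * Q * (R * S) - R * S * (P * Q) = P * R * (Q * S - S * Q) := by
  simp only [mul_sub, sub_mul, mul_assoc]
  rw [mid_comm _ hQR, mid_comm _ hPS.symm, mid_comm _ hPR.symm]

lemma lie4zero (P Q R S : A) (hPR : P * R = R * P) (hPS : P * S = S * P)
    (hQR : Q * R = R * Q) (hQS : Q * S = S * Q) :
    P * Q * (R * S) - R * S * (P * Q) = 0 := by
  rw [lie4C P Q R S hQR hPR hPS, hQS, sub_self, mul_zero]

end ring

/-! ### Bilinear helpers -/

section bil
variable {L : Type*} [LieRing L] [LieAlgebra ℂ L] {T : Type*} [Ring T] [Algebra ℂ T]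

/-- The bilinear map `(u, v) ↦ P * g u * h v`. -/
def biP (P : T) (g h : L →ₗ[ℂ] T) : L →ₗ[ℂ] L →ₗ[ℂ] T :=
  LinearMap.mk₂ ℂ (fun u v => P * g u * (h v))
    (fun u u' v => by simp [map_add, mul_add, add_mul])
    (fun c u v => by simp [map_smul, smul_mul_assoc, mul_smul_comm])
    (fun u v v' => by simp [map_add, mul_add])
    (fun c u v => by simp [map_smul, mul_smul_comm])

@[simp] lemma biP_apply (P : T) (g h : L →ₗ[ℂ] T) (u v : L) :
    biP P g h u v = P * g u * h v := rfl

/-- The commutator, as a bilinear map. -/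
def Cmap (T : Type*) [Ring T] [Algebra ℂ T] : T →ₗ[ℂ] T →ₗ[ℂ] T :=
  LinearMap.mk₂ ℂ (fun x y => x * y - y * x)
    (fun x x' y => by simp [add_mul, mul_add]; abel)
    (fun c x y => by simp [smul_mul_assoc, mul_smul_comm, smul_sub])
    (fun x y y' => by simp [add_mul, mul_add]; abel)
    (fun c x y => by simp [smul_mul_assoc, mul_smul_comm, smul_sub])

@[simp] lemma Cmap_apply {T : Type*} [Ring T] [Algebra ℂ T] (x y : T) :
    Cmap T x y = x * y - y * x := rfl

lemma Cmap_expand {T : Type*} [Ring T] [Algebra ℂ T] {ι κι : Type*}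
    (s u : Finset ι) (t v : Finset κι) (c e : ι → ℂ) (f g : ι → κι → T) :
    Cmap T (∑ k ∈ s, ∑ a ∈ t, c k • f k a) (∑ l ∈ u, ∑ b ∈ v, e l • g l b)
      = ∑ k ∈ s, ∑ l ∈ u, ∑ a ∈ t, ∑ b ∈ v, (c k * e l) • Cmap T (f k a) (g l b) := by
  calc Cmap T (∑ k ∈ s, ∑ a ∈ t, c k • f k a) (∑ l ∈ u, ∑ b ∈ v, e l • g l b)
      = ∑ l ∈ u, ∑ b ∈ v,
          e l • ((Cmap T (∑ k ∈ s, ∑ a ∈ t, c k • f k a)) (g l b)) := by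
        rw [map_sum]
        refine Finset.sum_congr rfl fun l _ => ?_
        rw [map_sum]
        exact Finset.sum_congr rfl fun b _ => map_smul _ _ _
    _ = ∑ l ∈ u, ∑ b ∈ v, ∑ k ∈ s, ∑ a ∈ t, (c k * e l) • Cmap T (f k a) (g l b) := by
        refine Finset.sum_congr rfl fun l _ => Finset.sum_congr rfl fun b _ => ?_
        rw [map_sum, LinearMap.sum_apply, Finset.smul_sum]
        refine Finset.sum_congr rfl fun k _ => ?_
        rw [map_sum, LinearMap.sum_apply, Finset.smul_sum]
        refine Finset.sum_congr rfl fun a _ => ?_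
        rw [map_smul, LinearMap.smul_apply, smul_smul, mul_comm (e l) (c k)]
    _ = ∑ l ∈ u, ∑ k ∈ s, ∑ b ∈ v, ∑ a ∈ t, (c k * e l) • Cmap T (f k a) (g l b) := by
        exact Finset.sum_congr rfl fun l _ => Finset.sum_comm
    _ = ∑ k ∈ s, ∑ l ∈ u, ∑ b ∈ v, ∑ a ∈ t, (c k * e l) • Cmap T (f k a) (g l b) :=
        Finset.sum_comm
    _ = ∑ k ∈ s, ∑ l ∈ u, ∑ a ∈ t, ∑ b ∈ v, (c k * e l) • Cmap T (f k a) (g l b) := by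
        exact Finset.sum_congr rfl fun k _ => Finset.sum_congr rfl fun l _ =>
          Finset.sum_comm


end bil

/-! ### Slot lemmas -/

section slots
variable {L : Type*} [LieRing L] [LieAlgebra ℂ L]

lemma slot_mul_self (N : ℕ) (i : Fin N) (x y : UniversalEnvelopingAlgebra ℂ L) :
    slot N i x * slot N i y = slot N i (x * y) := by
  rw [slot, slot, slot, PiTensorProduct.tprod_mul_tprod]
  congr 1; funext t
  by_cases h : t = i
  · subst h; simp
  · simp [Function.update_of_ne h]

lemma slot_comm (N : ℕ) {i j : Fin N} (hij : i ≠ j)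
    (x y : UniversalEnvelopingAlgebra ℂ L) :
    slot N i x * slot N j y = slot N j y * slot N i x := by
  rw [slot, slot, PiTensorProduct.tprod_mul_tprod, PiTensorProduct.tprod_mul_tprod]
  congr 1; funext t
  by_cases h : t = i
  · subst h; simp [Function.update_of_ne hij.symm, Function.update_of_ne hij]
  · by_cases h' : t = j
    · subst h'; simp [Function.update_of_ne h]
    · simp [Function.update_of_ne h, Function.update_of_ne h']

lemma slot_add (N : ℕ) (i : Fin N) (x y : UniversalEnvelopingAlgebra ℂ L) :
    slot N i (x + y) = slot N i x + slot N i y :=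
  MultilinearMap.map_update_add _ _ _ _ _

lemma slot_sub (N : ℕ) (i : Fin N) (x y : UniversalEnvelopingAlgebra ℂ L) :
    slot N i (x - y) = slot N i x - slot N i y :=
  MultilinearMap.map_update_sub _ _ _ _ _

lemma slot_smul (N : ℕ) (i : Fin N) (c : ℂ) (x : UniversalEnvelopingAlgebra ℂ L) :
    slot N i (c • x) = c • slot N i x :=
  MultilinearMap.map_update_smul _ _ _ _ _

/-- `slotL` as a linear map in the Lie algebra element. -/
def XL (N : ℕ) (i : Fin N) : L →ₗ[ℂ] (⨂[ℂ] _ : Fin N, UniversalEnvelopingAlgebra ℂ L) where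
  toFun A := slotL N i A
  map_add' x y := by simp only [slotL, map_add, slot_add]
  map_smul' c x := by simp only [slotL, map_smul, slot_smul, RingHom.id_apply]

@[simp] lemma XL_apply (N : ℕ) (i : Fin N) (A : L) : XL N i A = slotL N i A := rfl

lemma slotL_lie (N : ℕ) (i : Fin N) (A B : L) :
    slotL N i ⁅A, B⁆ = slotL N i A * slotL N i B - slotL N i B * slotL N i A := by
  simp only [slotL, LieHom.map_lie, Ring.lie_def, slot_sub, ← slot_mul_self]

lemma slotL_comm (N : ℕ) {i j : Fin N} (hij : i ≠ j) (A B : L) :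
    slotL N i A * slotL N j B = slotL N j B * slotL N i A :=
  slot_comm N hij _ _

lemma slotL_neg (N : ℕ) (i : Fin N) (A : L) :
    slotL N i (-A) = - slotL N i A := by
  have := map_neg (XL N i) A
  simpa using this

end slots

/-! ### Bilinear-form lemmas -/

section kappa
variable {L : Type*} [LieRing L] [LieAlgebra ℂ L]
variable {M : Type*} [AddCommGroup M] [Module ℂ M]

lemma coeff1 (κ : LinearMap.BilinForm ℂ L) {d : ℕ} (J : Module.Basis (Fin d) ℂ L) (J' : Fin d → L)
    (hdual : ∀ a b, κ (J a) (J' b) = if a = b then (1 : ℂ) else 0)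
    (x : L) (a : Fin d) : κ x (J' a) = J.repr x a := by
  conv_lhs => rw [← Module.Basis.sum_repr J x]
  simp [-Module.Basis.sum_repr, hdual, Finset.sum_ite_eq']

lemma expand1 (κ : LinearMap.BilinForm ℂ L) {d : ℕ} (J : Module.Basis (Fin d) ℂ L) (J' : Fin d → L)
    (hdual : ∀ a b, κ (J a) (J' b) = if a = b then (1 : ℂ) else 0)
    (x : L) : ∑ a, κ x (J' a) • J a = x := by
  simp only [coeff1 κ J J' hdual]
  exact Module.Basis.sum_repr J x

lemma expand2 (κ : LinearMap.BilinForm ℂ L)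
    (hsymm : ∀ x y, κ x y = κ y x) (hnd : κ.Nondegenerate)
    {d : ℕ} (J : Module.Basis (Fin d) ℂ L) (J' : Fin d → L)
    (hdual : ∀ a b, κ (J a) (J' b) = if a = b then (1 : ℂ) else 0)
    (x : L) : ∑ a, κ (J a) x • J' a = x := by
  set y := ∑ a, κ (J a) x • J' a with hy
  have hb : ∀ b, κ (J b) y = κ (J b) x := by
    intro b
    simp only [hy, map_sum, map_smul, smul_eq_mul, hdual]
    simp [Finset.sum_ite_eq]
  have h0 : ∀ w, κ (y - x) w = 0 := by
    intro w
    have hw : ∀ b, κ (y - x) (J b) = 0 := by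
      intro b
      rw [hsymm]; simp [hb b]
    have hz : (κ (y - x)) = 0 := by
      apply Module.Basis.ext J
      intro b; simpa using hw b
    simp [hz]
  exact sub_eq_zero.mp (hnd.1 (y - x) h0)

lemma lemA (κ : LinearMap.BilinForm ℂ L)
    (hsymm : ∀ x y, κ x y = κ y x)
    {d : ℕ} (J : Module.Basis (Fin d) ℂ L) (J' : Fin d → L)
    (hdual : ∀ a b, κ (J a) (J' b) = if a = b then (1 : ℂ) else 0)
    (f : L →ₗ[ℂ] L →ₗ[ℂ] M) :
    ∑ a, f (J a) (J' a) = ∑ a, f (J' a) (J a) := by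
  have e : ∀ a : Fin d, (J' a : L) = ∑ b, κ (J' a) (J' b) • J b := fun a =>
    (expand1 κ J J' hdual (J' a)).symm
  calc ∑ a, f (J a) (J' a)
      = ∑ a, ∑ b, κ (J' a) (J' b) • f (J a) (J b) := by
        refine Finset.sum_congr rfl fun a _ => ?_
        conv_lhs => rw [e a]
        simp [map_sum, map_smul]
    _ = ∑ a, ∑ b, κ (J' b) (J' a) • f (J b) (J a) := by
        rw [Finset.sum_comm]
    _ = ∑ a, f (J' a) (J a) := by
        refine Finset.sum_congr rfl fun a _ => ?_
        conv_rhs => rw [e a]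
        simp only [map_sum, map_smul, LinearMap.sum_apply, LinearMap.smul_apply]
        refine Finset.sum_congr rfl fun b _ => ?_
        rw [hsymm (J' b) (J' a)]

lemma lemB (κ : LinearMap.BilinForm ℂ L)
    (hsymm : ∀ x y, κ x y = κ y x)
    (hinv : ∀ x y w, κ ⁅x, y⁆ w = κ x ⁅y, w⁆)
    (hnd : κ.Nondegenerate)
    {d : ℕ} (J : Module.Basis (Fin d) ℂ L) (J' : Fin d → L)
    (hdual : ∀ a b, κ (J a) (J' b) = if a = b then (1 : ℂ) else 0)
    (f : L →ₗ[ℂ] L →ₗ[ℂ] M) (A : L) :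
    ∑ a, f ⁅A, J a⁆ (J' a) = - ∑ a, f (J a) ⁅A, J' a⁆ := by
  have key : ∀ a b : Fin d, κ ⁅A, J a⁆ (J' b) = - κ (J a) ⁅A, J' b⁆ := by
    intro a b
    have h1 : κ ⁅J a, A⁆ (J' b) = κ (J a) ⁅A, J' b⁆ := hinv _ _ _
    have h2 : (⁅J a, A⁆ : L) = -⁅A, J a⁆ := (lie_skew _ _).symm
    rw [h2] at h1
    simp only [map_neg, LinearMap.neg_apply] at h1
    rw [← h1, neg_neg]
  calc ∑ a, f ⁅A, J a⁆ (J' a)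
      = ∑ a, ∑ b, κ ⁅A, J a⁆ (J' b) • f (J b) (J' a) := by
        refine Finset.sum_congr rfl fun a _ => ?_
        conv_lhs => rw [← expand1 κ J J' hdual ⁅A, J a⁆]
        simp [map_sum, map_smul]
    _ = ∑ a, ∑ b, -(κ (J a) ⁅A, J' b⁆ • f (J b) (J' a)) := by
        simp only [key, neg_smul]
    _ = - ∑ a, ∑ b, κ (J b) ⁅A, J' a⁆ • f (J a) (J' b) := by
        simp only [Finset.sum_neg_distrib]
        rw [neg_inj]
        exact Finset.sum_comm
    _ = - ∑ a, f (J a) ⁅A, J' a⁆ := by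
        congr 1
        refine Finset.sum_congr rfl fun a _ => ?_
        conv_rhs => rw [← expand2 κ hsymm hnd J J' hdual ⁅A, J' a⁆]
        simp [map_sum, map_smul]

end kappa

/-! ### The `W` and `Bf` sums -/

section mainlemmas
variable {L : Type*} [LieRing L] [LieAlgebra ℂ L]

/-- `W = Σ_{a,b} J_a^{(i)} J_b^{(j)} [J'_a, J'_b]^{(m)}`. -/
def Wt (N : ℕ) {d : ℕ} (J J' : Fin d → L) (i j m : Fin N) :
    ⨂[ℂ] _ : Fin N, UniversalEnvelopingAlgebra ℂ L :=
  ∑ a, ∑ b, slotL N i (J a) * slotL N j (J b) * slotL N m ⁅J' a, J' b⁆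

/-- `Bf = Σ_{a,b} [J_a^{(i)} J'_a^{(k)}, J_b^{(j)} J'_b^{(l)}]`. -/
def Bf (N : ℕ) {d : ℕ} (J J' : Fin d → L) (i j k l : Fin N) :
    ⨂[ℂ] _ : Fin N, UniversalEnvelopingAlgebra ℂ L :=
  ∑ a, ∑ b, Cmap _ (slotL N i (J a) * slotL N k (J' a))
    (slotL N j (J b) * slotL N l (J' b))

variable (κ : LinearMap.BilinForm ℂ L)
  (hsymm : ∀ x y, κ x y = κ y x)
  (hinv : ∀ x y w, κ ⁅x, y⁆ w = κ x ⁅y, w⁆)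
  (hnd : κ.Nondegenerate)
  {d : ℕ} (J : Module.Basis (Fin d) ℂ L) (J' : Fin d → L)
  (hdual : ∀ a b, κ (J a) (J' b) = if a = b then (1 : ℂ) else 0)

include hsymm hinv hnd hdual in
lemma Bf_jm (N : ℕ) (i j m : Fin N) (hij : i ≠ j) (hmi : m ≠ i) (hmj : m ≠ j) :
    Bf N (⇑J) J' i j j m = - Wt N (⇑J) J' i j m := by
  have hterm : ∀ a b : Fin d,
      Cmap _ (slotL N i (J a) * slotL N j (J' a)) (slotL N j (J b) * slotL N m (J' b))
        = biP (slotL N i (J a)) (XL N j) (XL N m) ⁅J' a, J b⁆ (J' b) := by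
    intro a b
    rw [Cmap_apply, lie4A _ _ _ _ (slotL_comm N hij _ _) (slotL_comm N hmi.symm _ _)
      (slotL_comm N hmj.symm _ _), ← slotL_lie]
    simp
  calc Bf N (⇑J) J' i j j m
      = ∑ a, ∑ b, biP (slotL N i (J a)) (XL N j) (XL N m) ⁅J' a, J b⁆ (J' b) := by
        unfold Bf
        exact Finset.sum_congr rfl fun a _ => Finset.sum_congr rfl fun b _ => hterm a b
    _ = ∑ a, -∑ b, biP (slotL N i (J a)) (XL N j) (XL N m) (J b) ⁅J' a, J' b⁆ := by
        exact Finset.sum_congr rfl fun a _ =>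
          lemB κ hsymm hinv hnd J J' hdual _ (J' a)
    _ = - Wt N (⇑J) J' i j m := by
        rw [Finset.sum_neg_distrib]
        unfold Wt
        congr 1

include hsymm hinv hnd hdual in
lemma Bf_mi (N : ℕ) (i j m : Fin N) (hij : i ≠ j) (hmi : m ≠ i) (hmj : m ≠ j) :
    Bf N (⇑J) J' i j m i = - Wt N (⇑J) J' i j m := by
  have hterm : ∀ a b : Fin d,
      Cmap _ (slotL N i (J a) * slotL N m (J' a)) (slotL N j (J b) * slotL N i (J' b))
        = biP (slotL N j (J b)) (XL N i) (XL N m) ⁅J a, J' b⁆ (J' a) := by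
    intro a b
    rw [Cmap_apply, lie4B _ _ _ _ (slotL_comm N hmj _ _) (slotL_comm N hmi _ _)
      (slotL_comm N hij _ _), ← slotL_lie]
    simp
  calc Bf N (⇑J) J' i j m i
      = ∑ b, ∑ a, biP (slotL N j (J b)) (XL N i) (XL N m) ⁅J a, J' b⁆ (J' a) := by
        unfold Bf
        rw [Finset.sum_comm]
        exact Finset.sum_congr rfl fun b _ => Finset.sum_congr rfl fun a _ => hterm a b
    _ = ∑ b, ∑ a, biP (slotL N j (J b)) (XL N i) (XL N m) (J a) ⁅J' b, J' a⁆ := by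
        refine Finset.sum_congr rfl fun b _ => ?_
        calc ∑ a, biP (slotL N j (J b)) (XL N i) (XL N m) ⁅J a, J' b⁆ (J' a)
            = - ∑ a, biP (slotL N j (J b)) (XL N i) (XL N m) ⁅J' b, J a⁆ (J' a) := by
              rw [← Finset.sum_neg_distrib]
              refine Finset.sum_congr rfl fun a _ => ?_
              rw [show (⁅J a, J' b⁆ : L) = -⁅J' b, J a⁆ from (lie_skew _ _).symm,
                map_neg, LinearMap.neg_apply]
          _ = ∑ a, biP (slotL N j (J b)) (XL N i) (XL N m) (J a) ⁅J' b, J' a⁆ := by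
              rw [lemB κ hsymm hinv hnd J J' hdual _ (J' b), neg_neg]
    _ = ∑ b, ∑ a, -(slotL N i (J a) * slotL N j (J b) * slotL N m ⁅J' a, J' b⁆) := by
        refine Finset.sum_congr rfl fun b _ => Finset.sum_congr rfl fun a _ => ?_
        simp only [biP_apply, XL_apply]
        rw [show (⁅J' b, J' a⁆ : L) = -⁅J' a, J' b⁆ from (lie_skew _ _).symm,
          slotL_neg, mul_neg, slotL_comm N hij.symm (J b) (J a)]
    _ = - Wt N (⇑J) J' i j m := by
        simp only [Finset.sum_neg_distrib]
        rw [neg_inj]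
        unfold Wt
        exact Finset.sum_comm

lemma Bf_mm (N : ℕ) (i j m : Fin N) (hij : i ≠ j) (hmi : m ≠ i) (hmj : m ≠ j) :
    Bf N (⇑J) J' i j m m = Wt N (⇑J) J' i j m := by
  unfold Bf Wt
  refine Finset.sum_congr rfl fun a _ => Finset.sum_congr rfl fun b _ => ?_
  rw [Cmap_apply, lie4C _ _ _ _ (slotL_comm N hmj _ _) (slotL_comm N hij _ _)
    (slotL_comm N hmi.symm _ _), ← slotL_lie]

lemma Bf_offdiag (N : ℕ) (i j k l : Fin N) (hij : i ≠ j) (hil : i ≠ l)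
    (hkj : k ≠ j) (hkl : k ≠ l) :
    Bf N (⇑J) J' i j k l = 0 := by
  unfold Bf
  refine Finset.sum_eq_zero fun a _ => Finset.sum_eq_zero fun b _ => ?_
  rw [Cmap_apply]
  exact lie4zero _ _ _ _ (slotL_comm N hij _ _) (slotL_comm N hil _ _)
    (slotL_comm N hkj _ _) (slotL_comm N hkl _ _)

include hsymm hdual in
lemma Bf_ji (N : ℕ) (i j : Fin N) (hij : i ≠ j) :
    Bf N (⇑J) J' i j j i = 0 := by
  have hfold : Cmap _ (∑ a, slotL N i (J a) * slotL N j (J' a))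
          (∑ b, slotL N j (J b) * slotL N i (J' b))
      = Bf N (⇑J) J' i j j i := by
    rw [map_sum]
    have hstep : ∀ b : Fin d,
        (Cmap _ (∑ a, slotL N i (J a) * slotL N j (J' a)))
          (slotL N j (J b) * slotL N i (J' b))
        = ∑ a, Cmap _ (slotL N i (J a) * slotL N j (J' a))
            (slotL N j (J b) * slotL N i (J' b)) := fun b => by
      rw [map_sum, LinearMap.sum_apply]
    rw [Finset.sum_congr rfl fun b _ => hstep b]
    unfold Bf
    exact Finset.sum_comm
  have heq : (∑ b, slotL N j (J b) * slotL N i (J' b))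
      = ∑ a, slotL N i (J a) * slotL N j (J' a) := by
    have h1 := lemA (M := ⨂[ℂ] _ : Fin N, UniversalEnvelopingAlgebra ℂ L)
      κ hsymm J J' hdual (biP 1 (XL N j) (XL N i))
    simp only [biP_apply, one_mul, XL_apply] at h1
    rw [h1]
    exact Finset.sum_congr rfl fun a _ => slotL_comm N hij.symm _ _
  rw [← hfold, heq, Cmap_apply, sub_self]

end mainlemmas


/-- The Gaudin Hamiltonians commute pairwise: `[Ξ_i, Ξ_j] = 0` for all `i, j`. -/
theorem gaudin_commute {L : Type*} [LieRing L] [LieAlgebra ℂ L] [Module.Finite ℂ L]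
    [LieAlgebra.IsSimple ℂ L]
    (κ : LinearMap.BilinForm ℂ L)
    (hsymm : ∀ x y, κ x y = κ y x)
    (hinv : ∀ x y w, κ ⁅x, y⁆ w = κ x ⁅y, w⁆)
    (hnd : κ.Nondegenerate)
    (d : ℕ) (J : Module.Basis (Fin d) ℂ L) (J' : Fin d → L)
    (hdual : ∀ a b, κ (J a) (J' b) = if a = b then (1 : ℂ) else 0)
    (N : ℕ) (z : Fin N → ℂ) (hz : Function.Injective z) (i j : Fin N) :
    gaudin N d z (⇑J) J' i * gaudin N d z (⇑J) J' j
      = gaudin N d z (⇑J) J' j * gaudin N d z (⇑J) J' i := by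
  classical
  rcases eq_or_ne i j with rfl | hij
  · rfl
  rw [← sub_eq_zero, ← Cmap_apply]
  -- Step 1: expand the commutator into a double sum of the `Bf`.
  have step1 : Cmap _ (gaudin N d z (⇑J) J' i) (gaudin N d z (⇑J) J' j)
      = ∑ k ∈ Finset.univ.erase i, ∑ l ∈ Finset.univ.erase j,
          ((z i - z k)⁻¹ * (z j - z l)⁻¹) • Bf N (⇑J) J' i j k l := by
    unfold gaudin
    rw [Cmap_expand]
    refine Finset.sum_congr rfl fun k _ => Finset.sum_congr rfl fun l _ => ?_
    unfold Bf
    simp only [Finset.smul_sum]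
  rw [step1]
  -- membership facts and the set `E` of indices distinct from both `i` and `j`
  have hjEi : j ∈ Finset.univ.erase i := Finset.mem_erase.mpr ⟨hij.symm, Finset.mem_univ j⟩
  have hiEj : i ∈ Finset.univ.erase j := Finset.mem_erase.mpr ⟨hij, Finset.mem_univ i⟩
  have hEj : (Finset.univ.erase j).erase i = (Finset.univ.erase i).erase j :=
    Finset.erase_right_comm
  set E := (Finset.univ.erase i).erase j with hE
  have hmemE : ∀ k ∈ E, k ≠ i ∧ k ≠ j := by
    intro k hk
    rw [hE, Finset.mem_erase, Finset.mem_erase] at hk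
    exact ⟨hk.2.1, hk.1⟩
  -- Step 2: split off the `k = j` and `l = i` terms.
  have hsplit : ∀ (f : Fin N → Fin N → (⨂[ℂ] _ : Fin N, UniversalEnvelopingAlgebra ℂ L)),
      ∑ k ∈ Finset.univ.erase i, ∑ l ∈ Finset.univ.erase j, f k l
      = (f j i + ∑ l ∈ E, f j l) + ∑ k ∈ E, (f k i + ∑ l ∈ E, f k l) := by
    intro f
    rw [← Finset.add_sum_erase _ _ hjEi]
    congr 1
    · rw [← Finset.add_sum_erase _ _ hiEj, hEj]
    · exact Finset.sum_congr rfl fun k _ => by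
        rw [← Finset.add_sum_erase _ _ hiEj, hEj]
  rw [hsplit]
  -- distinctness of the `z` values
  have hzij : z i - z j ≠ 0 := sub_ne_zero.mpr (fun h => hij (hz h))
  -- the `(j, i)` term vanishes
  rw [Bf_ji κ hsymm J J' hdual N i j hij, smul_zero, zero_add]
  -- the three-site terms
  have hjm : ∀ m ∈ E, ((z i - z j)⁻¹ * (z j - z m)⁻¹) • Bf N (⇑J) J' i j j m
      = ((z i - z j)⁻¹ * (z j - z m)⁻¹) • (- Wt N (⇑J) J' i j m) := by
    intro m hm
    rw [Bf_jm κ hsymm hinv hnd J J' hdual N i j m hij (hmemE m hm).1 (hmemE m hm).2]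
  have hmi : ∀ m ∈ E, ((z i - z m)⁻¹ * (z j - z i)⁻¹) • Bf N (⇑J) J' i j m i
      = ((z i - z m)⁻¹ * (z j - z i)⁻¹) • (- Wt N (⇑J) J' i j m) := by
    intro m hm
    rw [Bf_mi κ hsymm hinv hnd J J' hdual N i j m hij (hmemE m hm).1 (hmemE m hm).2]
  have hdiag : ∀ m ∈ E, ∑ l ∈ E, ((z i - z m)⁻¹ * (z j - z l)⁻¹) • Bf N (⇑J) J' i j m l
      = ((z i - z m)⁻¹ * (z j - z m)⁻¹) • Wt N (⇑J) J' i j m := by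
    intro m hm
    rw [Finset.sum_eq_single_of_mem m hm]
    · rw [Bf_mm J J' N i j m hij (hmemE m hm).1 (hmemE m hm).2]
    · intro l hl hlm
      rw [Bf_offdiag J J' N i j m l hij (Ne.symm (hmemE l hl).1) (hmemE m hm).2
        hlm.symm, smul_zero]
  -- reassemble
  rw [Finset.sum_congr rfl hjm,
    Finset.sum_congr rfl (fun k hk =>
      congrArg₂ (· + ·) (hmi k hk) (hdiag k hk)),
    ← Finset.sum_add_distrib]
  refine Finset.sum_eq_zero fun m hm => ?_
  beta_reduce
  have hzim : z i - z m ≠ 0 := sub_ne_zero.mpr (fun h => (hmemE m hm).1 (hz h).symm)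
  have hzjm : z j - z m ≠ 0 := sub_ne_zero.mpr (fun h => (hmemE m hm).2 (hz h).symm)
  rw [smul_neg, smul_neg, ← neg_smul, ← neg_smul, ← add_smul, ← add_smul]
  have hscal : -((z i - z j)⁻¹ * (z j - z m)⁻¹) + (-((z i - z m)⁻¹ * (z j - z i)⁻¹)
      + (z i - z m)⁻¹ * (z j - z m)⁻¹) = 0 := by
    have hzji : z j - z i ≠ 0 := sub_ne_zero.mpr fun h => hij (hz h).symm
    field_simp
    ring
  rw [hscal, zero_smul]
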